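/- Assume (H1), (H3), (H5), let μ > 0 satisfy γ₁ − μ > L, and let a : ℝ → ℝⁿ be Borel measurable. Then for every v₀ ∈ ℝᵐ the integral equation û_t = ∫_{−∞}^t e^{A(t−r)} U(û_r + a(r), v₀) dr, t ≤ 0, has a unique solution û in C⁻_μ(ℝⁿ), and its value at 0 satisfies |û₀| ≤ M_U/γ₁. (The map F̌⁰(v₀) := û₀ is the graph map of the invariant manifold of the limiting (ε = 0) system.) -/

import Mathlib

open scoped RealInnerProductSpace
open MeasureTheory

/-- `û` solves the limiting (`ε = 0`) integral equation on `(-∞, 0]`: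
`û_t = ∫_{-∞}^t e^{A(t-r)} U(û_r + a(r), v₀) dr`, as an element of `C⁻_μ(ℝⁿ)`
(continuity on `(-∞, 0]` and finiteness of `sup_{t ≤ 0} e^{μ t} ‖û_t‖`). -/
def IsLimitStarSolution (n m : ℕ) (μ : ℝ)
    (A : EuclideanSpace ℝ (Fin n) →L[ℝ] EuclideanSpace ℝ (Fin n))
    (U : EuclideanSpace ℝ (Fin n) × EuclideanSpace ℝ (Fin m) → EuclideanSpace ℝ (Fin n))
    (a : ℝ → EuclideanSpace ℝ (Fin n)) (v₀ : EuclideanSpace ℝ (Fin m))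
    (uh : ℝ → EuclideanSpace ℝ (Fin n)) : Prop :=
  ContinuousOn uh (Set.Iic 0) ∧
  (∃ K : ℝ, ∀ t : ℝ, t ≤ 0 → Real.exp (μ * t) * ‖uh t‖ ≤ K) ∧
  (∀ t : ℝ, t ≤ 0 →
    uh t = ∫ r in Set.Iic t, NormedSpace.exp ((t - r) • A) (U (uh r + a r, v₀)))

namespace LimitGraphAux

open Set Filter
open scoped Topology

variable {n : ℕ}

local notation "E" => EuclideanSpace ℝ (Fin n)

/-- Semigroup decay estimate from the one-sided dissipativity condition (H1). -/
theorem expA_bound {γ₁ : ℝ} (A : E →L[ℝ] E)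
    (hA : ∀ x : E, ⟪A x, x⟫ ≤ -γ₁ * ‖x‖ ^ 2) {s : ℝ} (hs : 0 ≤ s) (x : E) :
    ‖NormedSpace.exp (s • A) x‖ ≤ Real.exp (-(γ₁ * s)) * ‖x‖ := by
  set y : ℝ → E := fun u => NormedSpace.exp (u • A) x with hy_def
  have hy : ∀ u : ℝ, HasDerivAt y (A (y u)) u := by
    intro u
    have h1 := hasDerivAt_exp_smul_const' (𝕂 := ℝ) A u
    have h2 := (ContinuousLinearMap.apply ℝ E x).hasFDerivAt.comp_hasDerivAt u h1
    exact h2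
  have hφ : ∀ u : ℝ, HasDerivAt (fun u => Real.exp (2*γ₁*u) * ⟪y u, y u⟫)
      ((Real.exp (2*γ₁*u) * (2*γ₁*1)) * ⟪y u, y u⟫
        + Real.exp (2*γ₁*u) * (⟪y u, A (y u)⟫ + ⟪A (y u), y u⟫)) u := by
    intro u
    exact (((hasDerivAt_id u).const_mul (2*γ₁)).exp).mul ((hy u).inner ℝ (hy u))
  have hanti : Antitone (fun u => Real.exp (2*γ₁*u) * ⟪y u, y u⟫) := by
    apply antitone_of_deriv_nonpos
    · exact fun u => (hφ u).differentiableAt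
    · intro u
      rw [(hφ u).deriv]
      have h1 : ⟪A (y u), y u⟫ ≤ -γ₁ * ‖y u‖ ^ 2 := hA (y u)
      have h2 : ⟪y u, A (y u)⟫ = ⟪A (y u), y u⟫ := real_inner_comm _ _
      have h3 : ⟪y u, y u⟫ = ‖y u‖ ^ 2 := real_inner_self_eq_norm_sq _
      have h4 : (0:ℝ) < Real.exp (2*γ₁*u) := Real.exp_pos _
      rw [h2, h3]
      nlinarith [mul_le_mul_of_nonneg_left h1 h4.le]
  have hy0 : y 0 = x := by
    show NormedSpace.exp ((0:ℝ) • A) x = x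
    rw [show ((0:ℝ) • A) = 0 from zero_smul ℝ A, NormedSpace.exp_zero,
      ContinuousLinearMap.one_apply]
  have key : Real.exp (2*γ₁*s) * ⟪y s, y s⟫ ≤ ⟪x, x⟫ := by
    have h := hanti hs
    simpa [hy0] using h
  have hsq : (Real.exp (γ₁*s) * ‖y s‖) ^ 2 ≤ ‖x‖ ^ 2 := by
    have e1 : Real.exp (γ₁*s) ^ 2 = Real.exp (2*γ₁*s) := by
      rw [sq, ← Real.exp_add]; ring_nf
    have h3 : ⟪y s, y s⟫ = ‖y s‖ ^ 2 := real_inner_self_eq_norm_sq _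
    have h4 : ⟪x, x⟫ = ‖x‖ ^ 2 := real_inner_self_eq_norm_sq _
    rw [mul_pow, e1]
    rw [h3, h4] at key
    exact key
  have h5 : Real.exp (γ₁*s) * ‖y s‖ ≤ ‖x‖ := by
    have := Real.sqrt_le_sqrt hsq
    rwa [Real.sqrt_sq (by positivity), Real.sqrt_sq (norm_nonneg x)] at this
  rw [Real.exp_neg, inv_mul_eq_div, le_div_iff₀ (Real.exp_pos _), mul_comm]
  exact h5

/-- The exponential kernel is integrable on `(-∞, t]`. -/
theorem ker_integrableOn {c : ℝ} (hc : 0 < c) (t : ℝ) :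
    IntegrableOn (fun r => Real.exp (-(c * (t - r)))) (Iic t) := by
  have h1 : IntegrableOn (fun x => Real.exp (-(c*t)) * Real.exp (-c * x)) (Ioi (-t)) :=
    (exp_neg_integrableOn_Ioi _ hc).const_mul _
  have h2 : IntegrableOn (fun x => Real.exp (-(c*t)) * Real.exp (-c * x)) (Ici (-t)) :=
    (integrableOn_Ici_iff_integrableOn_Ioi (by finiteness)).mpr h1
  have heq : (fun r : ℝ => Real.exp (-(c * (t - r))))
      = (fun x => Real.exp (-(c*t)) * Real.exp (-c * x)) ∘ (fun r : ℝ => -r) := by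
    funext r
    simp only [Function.comp_apply]
    rw [← Real.exp_add]; congr 1; ring
  rw [heq]
  have m : MeasurableEmbedding (fun x : ℝ => -x) := (Homeomorph.neg ℝ).measurableEmbedding
  unfold IntegrableOn
  rw [show (volume : Measure ℝ) = Measure.map (fun x : ℝ => -x) volume by
        rw [Measure.map_neg_eq_self], m.restrict_map, m.integrable_map_iff]
  have hpre : (fun x : ℝ => -x) ⁻¹' (Iic t) = Ici (-t) := by
    ext x; simp [neg_le]
  rw [hpre]
  have hcomp : (((fun x => Real.exp (-(c*t)) * Real.exp (-c * x)) ∘ (fun r : ℝ => -r)) ∘ (fun x : ℝ => -x))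
      = fun x => Real.exp (-(c*t)) * Real.exp (-c * x) := by
    funext x; simp [Function.comp_apply]
  rw [hcomp]
  exact h2

/-- The exponential kernel integrates to `1/c` over `(-∞, t]`. -/
theorem ker_integral {c : ℝ} (hc : 0 < c) (t : ℝ) :
    ∫ r in Iic t, Real.exp (-(c * (t - r))) = 1 / c := by
  have hderiv : ∀ r ∈ Iic t, HasDerivAt (fun r : ℝ => Real.exp (-(c * (t - r))) / c)
      (Real.exp (-(c * (t - r)))) r := by
    intro r _
    have h := (((hasDerivAt_id r).const_mul c).sub_const (c*t)).exp.div_const c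
    simp only [id_eq] at h
    rw [show (fun x : ℝ => Real.exp (c * x - c * t) / c)
        = (fun x : ℝ => Real.exp (-(c * (t - x))) / c) from
      funext fun u => by rw [show c * u - c * t = -(c * (t - u)) by ring]] at h
    rwa [show Real.exp (c * r - c * t) * (c * 1) / c = Real.exp (-(c * (t - r))) from by
      rw [show c * r - c * t = -(c * (t - r)) by ring]; field_simp] at h
  have htend : Tendsto (fun r : ℝ => Real.exp (-(c * (t - r))) / c) atBot (𝓝 0) := by
    have h1 : Tendsto (fun r : ℝ => c * r) atBot atBot :=
      Tendsto.const_mul_atBot hc tendsto_id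
    have h2 : Tendsto (fun r : ℝ => c * r + -(c*t)) atBot atBot :=
      tendsto_atBot_add_const_right atBot _ h1
    have h3 : Tendsto (fun r : ℝ => Real.exp (-(c * (t - r)))) atBot (𝓝 0) := by
      have := Real.tendsto_exp_atBot.comp h2
      apply this.congr
      intro r
      simp only [Function.comp_apply]
      congr 1
      ring
    simpa using h3.div_const c
  have h := integral_Iic_of_hasDerivAt_of_tendsto' hderiv (ker_integrableOn hc t) htend
  rw [h]
  simp

/-- Measurability of the integrand. -/
theorem integrand_aestronglyMeasurable (A : E →L[ℝ] E) (t : ℝ) {μ : Measure ℝ}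
    {g : ℝ → E} (hg : AEMeasurable g μ) :
    AEStronglyMeasurable (fun r => NormedSpace.exp ((t - r) • A) (g r)) μ := by
  have k : Continuous (fun p : ℝ × E => NormedSpace.exp ((t - p.1) • A) p.2) := by
    have h1 : Continuous (fun p : ℝ × E =>
        (NormedSpace.exp ((t - p.1) • A), p.2)) :=
      ((continuous_iff_continuousAt.mpr fun x => (NormedSpace.exp_analytic (𝕂 := ℝ) x).continuousAt).comp
        (((continuous_const.sub continuous_fst)).smul continuous_const)).prodMk continuous_snd
    exact isBoundedBilinearMap_apply.continuous.comp h1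
  have : AEMeasurable (fun r => (r, g r)) μ := aemeasurable_id.prodMk hg
  exact (k.measurable.comp_aemeasurable this).aestronglyMeasurable

/-- Integrability of the integrand. -/
theorem integrand_integrableOn {γ₁ C : ℝ} (hγ₁ : 0 < γ₁) (A : E →L[ℝ] E)
    (hA : ∀ x : E, ⟪A x, x⟫ ≤ -γ₁ * ‖x‖ ^ 2) {g : ℝ → E} {t : ℝ}
    (hg : AEMeasurable g (volume.restrict (Iic t))) (hb : ∀ r, ‖g r‖ ≤ C) :
    IntegrableOn (fun r => NormedSpace.exp ((t - r) • A) (g r)) (Iic t) := by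
  refine Integrable.mono' ((ker_integrableOn hγ₁ t).mul_const C)
    (integrand_aestronglyMeasurable A t hg) ?_
  filter_upwards [ae_restrict_mem measurableSet_Iic] with r hr
  calc ‖NormedSpace.exp ((t - r) • A) (g r)‖
      ≤ Real.exp (-(γ₁ * (t - r))) * ‖g r‖ := expA_bound A hA (sub_nonneg.mpr hr) _
    _ ≤ Real.exp (-(γ₁ * (t - r))) * C :=
        mul_le_mul_of_nonneg_left (hb r) (Real.exp_pos _).le

/-- Norm bound for the integral. -/
theorem integral_norm_le {γ₁ C : ℝ} (hγ₁ : 0 < γ₁) (A : E →L[ℝ] E)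
    (hA : ∀ x : E, ⟪A x, x⟫ ≤ -γ₁ * ‖x‖ ^ 2) {g : ℝ → E} {t : ℝ}
    (hg : AEMeasurable g (volume.restrict (Iic t))) (hb : ∀ r, ‖g r‖ ≤ C) :
    ‖∫ r in Iic t, NormedSpace.exp ((t - r) • A) (g r)‖ ≤ C / γ₁ := by
  have hbb : ∀ᵐ r ∂(volume.restrict (Iic t)),
      ‖NormedSpace.exp ((t - r) • A) (g r)‖ ≤ Real.exp (-(γ₁ * (t - r))) * C := by
    filter_upwards [ae_restrict_mem measurableSet_Iic] with r hr
    calc ‖NormedSpace.exp ((t - r) • A) (g r)‖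
        ≤ Real.exp (-(γ₁ * (t - r))) * ‖g r‖ := expA_bound A hA (sub_nonneg.mpr hr) _
      _ ≤ Real.exp (-(γ₁ * (t - r))) * C :=
          mul_le_mul_of_nonneg_left (hb r) (Real.exp_pos _).le
  have h := norm_integral_le_of_norm_le ((ker_integrableOn hγ₁ t).mul_const C) hbb
  rw [integral_mul_const, ker_integral hγ₁ t] at h
  calc ‖∫ r in Iic t, NormedSpace.exp ((t - r) • A) (g r)‖ ≤ 1 / γ₁ * C := h
    _ = C / γ₁ := by ring

/-- Continuity of the integral map in `t`. -/
theorem aux_cont {γ₁ C : ℝ} (hγ₁ : 0 < γ₁) (hC : 0 ≤ C) (A : E →L[ℝ] E)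
    (hA : ∀ x : E, ⟪A x, x⟫ ≤ -γ₁ * ‖x‖ ^ 2) {g : ℝ → E}
    (hg : AEMeasurable g volume) (hb : ∀ r, ‖g r‖ ≤ C) :
    Continuous (fun t => ∫ r in Iic t, NormedSpace.exp ((t - r) • A) (g r)) := by
  rw [continuous_iff_continuousAt]
  intro t₀
  have hrw : (fun t => ∫ r in Iic t, NormedSpace.exp ((t - r) • A) (g r))
      = fun t => ∫ r, Set.indicator (Iic t)
          (fun r => NormedSpace.exp ((t - r) • A) (g r)) r := by
    funext t
    rw [integral_indicator measurableSet_Iic]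
  rw [hrw]
  apply continuousAt_of_dominated (bound := fun r => Set.indicator (Iic (t₀+1))
      (fun r => C * Real.exp (-(γ₁ * (t₀ - 1 - r)))) r)
  · filter_upwards with t
    exact (integrand_aestronglyMeasurable A t hg).indicator measurableSet_Iic
  · filter_upwards [Ioo_mem_nhds (by linarith : t₀ - 1 < t₀) (by linarith : t₀ < t₀ + 1)]
      with t ht
    filter_upwards with r
    by_cases hr : r ≤ t
    · rw [Set.indicator_of_mem (show r ∈ Iic t from hr),
        Set.indicator_of_mem (show r ∈ Iic (t₀+1) from le_trans hr ht.2.le)]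
      calc ‖NormedSpace.exp ((t - r) • A) (g r)‖
          ≤ Real.exp (-(γ₁ * (t - r))) * ‖g r‖ := expA_bound A hA (sub_nonneg.mpr hr) _
        _ ≤ Real.exp (-(γ₁ * (t₀ - 1 - r))) * C := by
            apply mul_le_mul
            · apply Real.exp_le_exp.mpr
              nlinarith [ht.1]
            · exact hb r
            · exact norm_nonneg _
            · exact (Real.exp_pos _).le
        _ = C * Real.exp (-(γ₁ * (t₀ - 1 - r))) := mul_comm _ _
    · rw [Set.indicator_of_notMem (show r ∉ Iic t from fun hmem => hr (Set.mem_Iic.mp hmem))]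
      simp only [norm_zero]
      exact Set.indicator_apply_nonneg (fun _ => by positivity)
  · rw [integrable_indicator_iff measurableSet_Iic]
    have heq2 : (fun r : ℝ => C * Real.exp (-(γ₁ * (t₀ - 1 - r))))
        = fun r => (C * Real.exp (γ₁ * 2)) * Real.exp (-(γ₁ * ((t₀ + 1) - r))) := by
      funext r
      rw [mul_assoc, ← Real.exp_add]
      congr 2
      ring
    rw [heq2]
    exact (ker_integrableOn hγ₁ (t₀+1)).const_mul _
  · have hae : ∀ᵐ r : ℝ, r ≠ t₀ := by
      rw [ae_iff]
      have : {r : ℝ | ¬ r ≠ t₀} = {t₀} := by ext r; simp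
      rw [this]
      exact measure_singleton t₀
    filter_upwards [hae] with r hr
    have hcont : ContinuousAt (fun t => NormedSpace.exp ((t - r) • A) (g r)) t₀ := by
      have : Continuous (fun t : ℝ => NormedSpace.exp ((t - r) • A) (g r)) :=
        (ContinuousLinearMap.apply ℝ E (g r)).continuous.comp
          ((continuous_iff_continuousAt.mpr fun x => (NormedSpace.exp_analytic (𝕂 := ℝ) x).continuousAt).comp
            ((continuous_id.sub continuous_const).smul continuous_const))
      exact this.continuousAt
    rcases lt_or_gt_of_ne hr with h | h
    · apply hcont.congr
      filter_upwards [Ioi_mem_nhds h] with t ht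
      exact (Set.indicator_of_mem (show r ∈ Iic t from Set.mem_Iic.mpr (le_of_lt ht))
        (fun r' => NormedSpace.exp ((t - r') • A) (g r'))).symm
    · apply continuousAt_const.congr
      filter_upwards [Iio_mem_nhds h] with t ht
      exact (Set.indicator_of_notMem
        (show r ∉ Iic t from fun hmem => absurd (Set.mem_Iic.mp hmem) (not_le.mpr ht))
        (fun r' => NormedSpace.exp ((t - r') • A) (g r'))).symm

end LimitGraphAux

open scoped BoundedContinuousFunction

set_option maxHeartbeats 1000000

/-- Under (H1), (H3), (H5) and `γ₁ - μ > L` (`μ > 0`), for every `v₀ ∈ ℝᵐ`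
the integral equation `û_t = ∫_{-∞}^t e^{A(t-r)} U(û_r + a(r), v₀) dr`, `t ≤ 0`, has a unique
solution `û ∈ C⁻_μ(ℝⁿ)`, and its value at `0` (the graph map `F̌⁰(v₀)` of the invariant
manifold of the `ε = 0` system) satisfies `‖û₀‖ ≤ M_U/γ₁`. -/
theorem limit_graph_map_exists (n m : ℕ)
    (γ₁ L MU μ : ℝ)
    (A : EuclideanSpace ℝ (Fin n) →L[ℝ] EuclideanSpace ℝ (Fin n))
    (U : EuclideanSpace ℝ (Fin n) × EuclideanSpace ℝ (Fin m) → EuclideanSpace ℝ (Fin n))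
    -- (H1)
    (hγ₁ : 0 < γ₁)
    (hA : ∀ x : EuclideanSpace ℝ (Fin n), ⟪A x, x⟫ ≤ -γ₁ * ‖x‖ ^ 2)
    -- (H3)
    (hL : 0 < L)
    (hUL : ∀ x₁ y₁ x₂ y₂, ‖U (x₁, y₁) - U (x₂, y₂)‖ ≤ L * (‖x₁ - x₂‖ + ‖y₁ - y₂‖))
    -- (H5)
    (hMU : ∀ z, ‖U z‖ ≤ MU)
    -- scales: μ > 0, γ₁ - μ > L
    (hμ : 0 < μ) (hμL : L < γ₁ - μ)
    -- input path
    (a : ℝ → EuclideanSpace ℝ (Fin n)) (ha : Measurable a) :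
    ∀ v₀ : EuclideanSpace ℝ (Fin m),
      ∃ uh : ℝ → EuclideanSpace ℝ (Fin n),
        IsLimitStarSolution n m μ A U a v₀ uh ∧
        ‖uh 0‖ ≤ MU / γ₁ ∧
        ∀ uh' : ℝ → EuclideanSpace ℝ (Fin n),
          IsLimitStarSolution n m μ A U a v₀ uh' → ∀ t : ℝ, t ≤ 0 → uh' t = uh t := by
  intro v₀
  classical
  have hMU0 : 0 ≤ MU := (norm_nonneg (U (0, v₀))).trans (hMU _)
  have hγμ : 0 < γ₁ - μ := by linarith
  -- U is continuous
  have hUcont : Continuous U := by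
    have hlip : LipschitzWith (2*L).toNNReal U := by
      apply LipschitzWith.of_dist_le_mul
      intro p q
      rw [dist_eq_norm, Real.coe_toNNReal _ (by positivity)]
      have h := hUL p.1 p.2 q.1 q.2
      simp only [Prod.mk.eta] at h
      have h1 : ‖p.1 - q.1‖ ≤ dist p q := by
        rw [Prod.dist_eq, ← dist_eq_norm]
        exact le_max_left _ _
      have h2 : ‖p.2 - q.2‖ ≤ dist p q := by
        rw [Prod.dist_eq, ← dist_eq_norm]
        exact le_max_right _ _
      calc ‖U p - U q‖ ≤ L * (‖p.1 - q.1‖ + ‖p.2 - q.2‖) := h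
        _ ≤ L * (dist p q + dist p q) := by
            apply mul_le_mul_of_nonneg_left _ hL.le
            exact add_le_add h1 h2
        _ = 2 * L * dist p q := by ring
    exact hlip.continuous
  -- setup
  set g : (ℝ →ᵇ EuclideanSpace ℝ (Fin n)) → ℝ → EuclideanSpace ℝ (Fin n) :=
    fun u r => U (u r + a r, v₀) with hg_def
  have hgmeas : ∀ u : ℝ →ᵇ EuclideanSpace ℝ (Fin n), Measurable (g u) := fun u =>
    hUcont.measurable.comp ((u.continuous.measurable.add ha).prodMk measurable_const)
  have hgbdd : ∀ u r, ‖g u r‖ ≤ MU := fun u r => hMU _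
  set Tf : (ℝ →ᵇ EuclideanSpace ℝ (Fin n)) → ℝ → EuclideanSpace ℝ (Fin n) :=
    fun u t => ∫ r in Set.Iic t, NormedSpace.exp ((t - r) • A) (g u r) with hTf_def
  have hTcont : ∀ u, Continuous (Tf u) := fun u =>
    LimitGraphAux.aux_cont hγ₁ hMU0 A hA (hgmeas u).aemeasurable (hgbdd u)
  have hTbdd : ∀ u t, ‖Tf u t‖ ≤ MU / γ₁ := fun u t =>
    LimitGraphAux.integral_norm_le hγ₁ A hA (hgmeas u).aemeasurable (hgbdd u)
  set T : (ℝ →ᵇ EuclideanSpace ℝ (Fin n)) → (ℝ →ᵇ EuclideanSpace ℝ (Fin n)) :=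
    fun u => BoundedContinuousFunction.ofNormedAddCommGroup (Tf u) (hTcont u)
      (MU/γ₁) (hTbdd u) with hT_def
  have hK1 : L / γ₁ < 1 := (div_lt_one hγ₁).mpr (by linarith)
  have hKnn : (0:ℝ) ≤ L / γ₁ := by positivity
  -- contraction
  have hcontr : ContractingWith ⟨L/γ₁, hKnn⟩ T := by
    constructor
    · exact_mod_cast hK1
    · apply LipschitzWith.of_dist_le_mul
      intro u v
      rw [BoundedContinuousFunction.dist_le (by positivity)]
      intro t
      rw [dist_eq_norm]
      have hint_u := LimitGraphAux.integrand_integrableOn hγ₁ A hA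
        (g := g u) (t := t) (hgmeas u).aemeasurable (hgbdd u)
      have hint_v := LimitGraphAux.integrand_integrableOn hγ₁ A hA
        (g := g v) (t := t) (hgmeas v).aemeasurable (hgbdd v)
      have hTt : T u t - T v t = ∫ r in Set.Iic t,
          (NormedSpace.exp ((t - r) • A) (g u r) - NormedSpace.exp ((t - r) • A) (g v r)) := by
        show Tf u t - Tf v t = _
        rw [hTf_def]
        exact (integral_sub hint_u hint_v).symm
      rw [hTt]
      have hb : ∀ᵐ r ∂(volume.restrict (Set.Iic t)),
          ‖NormedSpace.exp ((t - r) • A) (g u r) - NormedSpace.exp ((t - r) • A) (g v r)‖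
            ≤ Real.exp (-(γ₁ * (t - r))) * (L * dist u v) := by
        filter_upwards [ae_restrict_mem measurableSet_Iic] with r hr
        rw [← map_sub]
        have hgd : ‖g u r - g v r‖ ≤ L * dist u v := by
          have h := hUL (u r + a r) v₀ (v r + a r) v₀
          have h2 : (u r + a r) - (v r + a r) = u r - v r := by abel
          rw [h2, sub_self, norm_zero, add_zero] at h
          calc ‖g u r - g v r‖ ≤ L * ‖u r - v r‖ := h
            _ ≤ L * dist u v := by
                apply mul_le_mul_of_nonneg_left _ hL.le
                rw [← dist_eq_norm]
                exact BoundedContinuousFunction.dist_coe_le_dist r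
        calc ‖NormedSpace.exp ((t - r) • A) (g u r - g v r)‖
            ≤ Real.exp (-(γ₁ * (t - r))) * ‖g u r - g v r‖ :=
              LimitGraphAux.expA_bound A hA (sub_nonneg.mpr hr) _
          _ ≤ Real.exp (-(γ₁ * (t - r))) * (L * dist u v) :=
              mul_le_mul_of_nonneg_left hgd (Real.exp_pos _).le
      have h := norm_integral_le_of_norm_le
        ((LimitGraphAux.ker_integrableOn hγ₁ t).mul_const (L * dist u v)) hb
      rw [integral_mul_const, LimitGraphAux.ker_integral hγ₁ t] at h
      calc ‖∫ r in Set.Iic t, (NormedSpace.exp ((t - r) • A) (g u r)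
              - NormedSpace.exp ((t - r) • A) (g v r))‖
          ≤ 1 / γ₁ * (L * dist u v) := h
        _ = L / γ₁ * dist u v := by ring
  -- fixed point
  set uhat : ℝ →ᵇ EuclideanSpace ℝ (Fin n) := ContractingWith.fixedPoint T hcontr with hu_def
  have hfix : T uhat = uhat := hcontr.fixedPoint_isFixedPt
  have heq : ∀ t : ℝ, uhat t = ∫ r in Set.Iic t,
      NormedSpace.exp ((t - r) • A) (U (uhat r + a r, v₀)) := by
    intro t
    conv_lhs => rw [← hfix]
    rfl
  have hub : ∀ t, ‖uhat t‖ ≤ MU / γ₁ := by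
    intro t
    rw [heq t]
    exact LimitGraphAux.integral_norm_le hγ₁ A hA (hgmeas uhat).aemeasurable (hgbdd uhat)
  refine ⟨uhat, ⟨uhat.continuous.continuousOn, ⟨MU/γ₁, ?_⟩, fun t _ => heq t⟩, hub 0, ?_⟩
  · intro t ht
    have h1 : Real.exp (μ * t) ≤ 1 := Real.exp_le_one_iff.mpr (by nlinarith)
    calc Real.exp (μ * t) * ‖uhat t‖ ≤ 1 * (MU / γ₁) :=
          mul_le_mul h1 (hub t) (norm_nonneg _) zero_le_one
      _ = MU / γ₁ := one_mul _
  -- uniqueness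
  intro uh' h'
  obtain ⟨hc', ⟨K, hK⟩, heq'⟩ := h'
  have hK0 : 0 ≤ K := le_trans (by positivity) (hK 0 le_rfl)
  set d : ℝ → ℝ := fun r => ‖uh' r - uhat r‖ with hd_def
  have hmeas' : ∀ t : ℝ, t ≤ 0 → AEMeasurable uh' (volume.restrict (Set.Iic t)) := by
    intro t ht
    have h0 : AEMeasurable uh' (volume.restrict (Set.Iic 0)) :=
      hc'.aemeasurable measurableSet_Iic
    exact h0.mono_measure (Measure.restrict_mono (Set.Iic_subset_Iic.mpr ht) le_rfl)
  have hg' : ∀ t : ℝ, t ≤ 0 →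
      AEMeasurable (fun r => U (uh' r + a r, v₀)) (volume.restrict (Set.Iic t)) := by
    intro t ht
    exact hUcont.measurable.comp_aemeasurable
      (((hmeas' t ht).add ha.aemeasurable).prodMk aemeasurable_const)
  have hub' : ∀ r : ℝ, r ≤ 0 → d r ≤ (K + MU/γ₁) * Real.exp (-(μ * r)) := by
    intro r hr
    have h1 : Real.exp (μ*r) * ‖uh' r‖ ≤ K := hK r hr
    have h4 : ‖uh' r‖ ≤ K * Real.exp (-(μ*r)) := by
      have h5 := mul_le_mul_of_nonneg_left h1 (Real.exp_pos (-(μ*r))).le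
      rw [← mul_assoc, ← Real.exp_add, neg_add_cancel, Real.exp_zero, one_mul] at h5
      linarith [h5]
    have hge1 : (1:ℝ) ≤ Real.exp (-(μ*r)) := Real.one_le_exp (by nlinarith)
    have h3 : d r ≤ ‖uh' r‖ + ‖uhat r‖ := norm_sub_le _ _
    have h6 : ‖uhat r‖ ≤ MU/γ₁ := hub r
    have h7 : (0:ℝ) ≤ MU/γ₁ := by positivity
    nlinarith
  set S : Set ℝ := (fun r => Real.exp (μ*r) * d r) '' (Set.Iic 0) with hS_def
  have hSne : S.Nonempty := ⟨_, ⟨0, Set.self_mem_Iic, rfl⟩⟩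
  have hSbdd : BddAbove S := by
    refine ⟨K + MU/γ₁, ?_⟩
    rintro x ⟨r, hr, rfl⟩
    have h1 := hub' r hr
    have he : Real.exp (μ*r) * Real.exp (-(μ*r)) = 1 := by
      rw [← Real.exp_add]; simp
    calc Real.exp (μ*r) * d r
        ≤ Real.exp (μ*r) * ((K + MU/γ₁) * Real.exp (-(μ*r))) :=
          mul_le_mul_of_nonneg_left h1 (Real.exp_pos _).le
      _ = (K + MU/γ₁) * (Real.exp (μ*r) * Real.exp (-(μ*r))) := by ring
      _ = K + MU/γ₁ := by rw [he, mul_one]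
  set D : ℝ := sSup S with hD_def
  have hDmem : ∀ r : ℝ, r ≤ 0 → Real.exp (μ*r) * d r ≤ D := fun r hr =>
    le_csSup hSbdd ⟨r, Set.mem_Iic.mpr hr, rfl⟩
  have hD0 : 0 ≤ D :=
    le_trans (by positivity : (0:ℝ) ≤ Real.exp (μ*0) * d 0) (hDmem 0 le_rfl)
  -- difference equation
  have hdiff : ∀ t : ℝ, t ≤ 0 → uh' t - uhat t = ∫ r in Set.Iic t,
      NormedSpace.exp ((t - r) • A) (U (uh' r + a r, v₀) - U (uhat r + a r, v₀)) := by
    intro t ht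
    have i1 := LimitGraphAux.integrand_integrableOn hγ₁ A hA
      (g := fun r => U (uh' r + a r, v₀)) (t := t) (hg' t ht) (fun r => hMU _)
    have i2 := LimitGraphAux.integrand_integrableOn hγ₁ A hA
      (g := g uhat) (t := t) (hgmeas uhat).aemeasurable (hgbdd uhat)
    rw [heq' t ht, heq t, ← integral_sub i1 i2]
    simp only [map_sub]
    rfl
  -- key contraction estimate in the weighted norm
  have hkey : ∀ t : ℝ, t ≤ 0 → Real.exp (μ*t) * d t ≤ (L/(γ₁-μ)) * D := by
    intro t ht
    have hdmeas : AEMeasurable d (volume.restrict (Set.Iic t)) :=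
      ((hmeas' t ht).sub (uhat.continuous.measurable.aemeasurable)).norm
    -- integrand bound function
    have hgd : ∀ r : ℝ, ‖U (uh' r + a r, v₀) - U (uhat r + a r, v₀)‖ ≤ L * d r := by
      intro r
      have h := hUL (uh' r + a r) v₀ (uhat r + a r) v₀
      have h2 : (uh' r + a r) - (uhat r + a r) = uh' r - uhat r := by abel
      rw [h2, sub_self, norm_zero, add_zero] at h
      exact h
    -- the scalar majorant is integrable
    have ihh : IntegrableOn (fun r => Real.exp (-(γ₁*(t-r))) * (L * d r)) (Set.Iic t) := by
      refine Integrable.mono'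
        ((LimitGraphAux.ker_integrableOn hγμ t).const_mul
          (L * (K + MU/γ₁) * Real.exp (-(μ*t)))) ?_ ?_
      · exact ((Continuous.aemeasurable (by fun_prop :
            Continuous (fun r : ℝ => Real.exp (-(γ₁*(t-r)))))).mul
            (hdmeas.const_mul L)).aestronglyMeasurable
      · filter_upwards [ae_restrict_mem measurableSet_Iic] with r hr
        have hdr : d r ≤ (K + MU/γ₁) * Real.exp (-(μ*r)) := hub' r (le_trans hr ht)
        have hnn : (0:ℝ) ≤ Real.exp (-(γ₁*(t-r))) * (L * d r) := by
          have : (0:ℝ) ≤ d r := norm_nonneg _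
          positivity
        rw [Real.norm_eq_abs, abs_of_nonneg hnn]
        have e1 : Real.exp (-(γ₁*(t-r))) * Real.exp (-(μ*r))
            = Real.exp (-(μ*t)) * Real.exp (-((γ₁-μ)*(t-r))) := by
          rw [← Real.exp_add, ← Real.exp_add]; congr 1; ring
        calc Real.exp (-(γ₁*(t-r))) * (L * d r)
            ≤ Real.exp (-(γ₁*(t-r))) * (L * ((K + MU/γ₁) * Real.exp (-(μ*r)))) := by
              apply mul_le_mul_of_nonneg_left _ (Real.exp_pos _).le
              exact mul_le_mul_of_nonneg_left hdr hL.le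
          _ = (Real.exp (-(γ₁*(t-r))) * Real.exp (-(μ*r))) * (L * (K + MU/γ₁)) := by ring
          _ = (Real.exp (-(μ*t)) * Real.exp (-((γ₁-μ)*(t-r)))) * (L * (K + MU/γ₁)) := by
              rw [e1]
          _ = L * (K + MU/γ₁) * Real.exp (-(μ*t)) * Real.exp (-((γ₁-μ)*(t-r))) := by ring
    -- bound the norm of the difference
    have hd1 : d t ≤ ∫ r in Set.Iic t, Real.exp (-(γ₁*(t-r))) * (L * d r) := by
      have hb : ∀ᵐ r ∂(volume.restrict (Set.Iic t)),
          ‖NormedSpace.exp ((t - r) • A) (U (uh' r + a r, v₀) - U (uhat r + a r, v₀))‖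
            ≤ Real.exp (-(γ₁*(t-r))) * (L * d r) := by
        filter_upwards [ae_restrict_mem measurableSet_Iic] with r hr
        calc ‖NormedSpace.exp ((t - r) • A) (U (uh' r + a r, v₀) - U (uhat r + a r, v₀))‖
            ≤ Real.exp (-(γ₁*(t-r))) * ‖U (uh' r + a r, v₀) - U (uhat r + a r, v₀)‖ :=
              LimitGraphAux.expA_bound A hA (sub_nonneg.mpr hr) _
          _ ≤ Real.exp (-(γ₁*(t-r))) * (L * d r) :=
              mul_le_mul_of_nonneg_left (hgd r) (Real.exp_pos _).le
      have := norm_integral_le_of_norm_le ihh hb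
      rw [hd_def]
      simp only
      rw [hdiff t ht]
      exact this
    -- multiply by the weight and compare with the sup
    have hd2 : Real.exp (μ*t) * d t
        ≤ ∫ r in Set.Iic t, Real.exp (μ*t) * (Real.exp (-(γ₁*(t-r))) * (L * d r)) := by
      rw [integral_const_mul]
      exact mul_le_mul_of_nonneg_left hd1 (Real.exp_pos _).le
    have hd3 : (∫ r in Set.Iic t, Real.exp (μ*t) * (Real.exp (-(γ₁*(t-r))) * (L * d r)))
        ≤ ∫ r in Set.Iic t, (L * D) * Real.exp (-((γ₁-μ)*(t-r))) := by
      apply setIntegral_mono_on (ihh.const_mul _)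
        ((LimitGraphAux.ker_integrableOn hγμ t).const_mul _) measurableSet_Iic
      intro r hr
      have e1 : Real.exp (μ*t) * Real.exp (-(γ₁*(t-r)))
          = Real.exp (-((γ₁-μ)*(t-r))) * Real.exp (μ*r) := by
        rw [← Real.exp_add, ← Real.exp_add]; congr 1; ring
      have hDr : Real.exp (μ*r) * d r ≤ D := hDmem r (le_trans hr ht)
      calc Real.exp (μ*t) * (Real.exp (-(γ₁*(t-r))) * (L * d r))
          = L * (Real.exp (-((γ₁-μ)*(t-r))) * (Real.exp (μ*r) * d r)) := by
            rw [show Real.exp (μ*t) * (Real.exp (-(γ₁*(t-r))) * (L * d r))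
                = (Real.exp (μ*t) * Real.exp (-(γ₁*(t-r)))) * (L * d r) by ring, e1]
            ring
        _ ≤ L * (Real.exp (-((γ₁-μ)*(t-r))) * D) := by
            apply mul_le_mul_of_nonneg_left _ hL.le
            exact mul_le_mul_of_nonneg_left hDr (Real.exp_pos _).le
        _ = (L * D) * Real.exp (-((γ₁-μ)*(t-r))) := by ring
    have hd4 : (∫ r in Set.Iic t, (L * D) * Real.exp (-((γ₁-μ)*(t-r))))
        = L / (γ₁-μ) * D := by
      rw [integral_const_mul, LimitGraphAux.ker_integral hγμ t]
      field_simp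
    linarith [hd2.trans (hd3.trans_eq hd4)]
  -- conclude : D ≤ q D with q < 1 forces D ≤ 0, hence d ≡ 0 on Iic 0
  have hq1 : L/(γ₁-μ) < 1 := (div_lt_one hγμ).mpr hμL
  have hDq : D ≤ (L/(γ₁-μ)) * D := by
    apply csSup_le hSne
    rintro x ⟨r, hr, rfl⟩
    exact hkey r hr
  have hDle : D ≤ 0 := by nlinarith
  intro t ht
  have h0 : Real.exp (μ*t) * d t ≤ 0 := le_trans (hDmem t ht) hDle
  have hdt : d t = 0 := by
    have h1 : (0:ℝ) ≤ d t := norm_nonneg _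
    nlinarith [Real.exp_pos (μ*t)]
  have : uh' t - uhat t = 0 := norm_eq_zero.mp hdt
  exact sub_eq_zero.mp this
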